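/- Fix $m>0$, $J \in \mathbb{R}$, and let $f:[m/2,\infty)\to\mathbb{R}$ be $C^1$. Define $P_J = 2\int_{m/2}^{\infty} \frac{m\,\alpha(r)}{4\, r^2\, \psi_0(r)^7} \int_{-1}^{1}\Big[f'(r)^2(1-z^2)^2 + \frac{(1-z^2)\,(4 f(r) z + 3J)^2}{r^2}\Big]dz\, dr$, assuming this improper integral converges. Then $P_J \ge \frac{J^2}{4 m^2}$. -/

import Mathlib

/-- `ψ₀(r) = 1 + m/(2r)`. -/
noncomputable def psi0 (m r : ℝ) : ℝ := 1 + m / (2 * r)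

/-- `α(r) = 1 - m/(2r)`. -/
noncomputable def alphaF (m r : ℝ) : ℝ := 1 - m / (2 * r)

/-- The improper integral `∫_a^∞ f` converges and equals `L`. -/
def ImproperEq (f : ℝ → ℝ) (a L : ℝ) : Prop :=
  (∀ b : ℝ, IntervalIntegrable f MeasureTheory.volume a b) ∧
    Filter.Tendsto (fun b : ℝ => ∫ r in a..b, f r) Filter.atTop (nhds L)

open intervalIntegral Filter Set

/-- inner z-integral lower bound -/
lemma PJ_inner_bound (A F J r : ℝ) (hA : 0 ≤ A) (hr : 0 < r) :
    12 * J ^ 2 / r ^ 2 ≤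
      ∫ z in (-1 : ℝ)..1, (A * (1 - z ^ 2) ^ 2 + (1 - z ^ 2) * (4 * F * z + 3 * J) ^ 2 / r ^ 2) := by
  set g : ℝ → ℝ := fun z => (1 - z ^ 2) * (24 * F * J * z + 9 * J ^ 2) / r ^ 2 with hg
  have hQ : ∀ z : ℝ, HasDerivAt
      (fun z => (24 * F * J * (z ^ 2 / 2 - z ^ 4 / 4) + 9 * J ^ 2 * (z - z ^ 3 / 3)) / r ^ 2)
      (g z) z := by
    intro z
    have h2 : HasDerivAt (fun z : ℝ => z ^ 2) (2 * z) z := by simpa using hasDerivAt_pow 2 z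
    have h4 : HasDerivAt (fun z : ℝ => z ^ 4) (4 * z ^ 3) z := by simpa using hasDerivAt_pow 4 z
    have h3 : HasDerivAt (fun z : ℝ => z ^ 3) (3 * z ^ 2) z := by simpa using hasDerivAt_pow 3 z
    have hid := hasDerivAt_id z
    have := ((((h2.div_const 2).sub (h4.div_const 4)).const_mul (24 * F * J)).add
      ((hid.sub (h3.div_const 3)).const_mul (9 * J ^ 2))).div_const (r ^ 2)
    have this' : HasDerivAt (_ : ℝ → ℝ) (_ : ℝ) z := this
    convert this' using 1
    simp [hg]; ring
  have hgint : ∫ z in (-1 : ℝ)..1, g z = 12 * J ^ 2 / r ^ 2 := by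
    rw [intervalIntegral.integral_eq_sub_of_hasDerivAt (fun z _ => hQ z)
      (by apply Continuous.intervalIntegrable; fun_prop)]
    field_simp
    ring
  rw [← hgint]
  apply intervalIntegral.integral_mono_on (by norm_num)
  · apply Continuous.intervalIntegrable; fun_prop
  · apply Continuous.intervalIntegrable; fun_prop
  · intro z hz
    have h1 : 0 ≤ 1 - z ^ 2 := by nlinarith [hz.1, hz.2]
    have key : A * (1 - z ^ 2) ^ 2 + (1 - z ^ 2) * (4 * F * z + 3 * J) ^ 2 / r ^ 2 - g z
        = A * (1 - z ^ 2) ^ 2 + (1 - z ^ 2) * (16 * F ^ 2 * z ^ 2) / r ^ 2 := by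
      simp [hg]; ring
    nlinarith [mul_nonneg hA (sq_nonneg (1 - z ^ 2)),
      div_nonneg (mul_nonneg h1 (by positivity : (0:ℝ) ≤ 16 * F ^ 2 * z ^ 2)) (sq_nonneg r)]

/-- lower comparison function -/
noncomputable def PJ_G (m J r : ℝ) : ℝ := 6 * m * J ^ 2 * (r ^ 2 * (r - m / 2)) / (r + m / 2) ^ 7

/-- antiderivative of `PJ_G` -/
noncomputable def PJ_H (m J r : ℝ) : ℝ :=
  6 * m * J ^ 2 * (-(((r + m / 2)⁻¹) ^ 3) / 3 + (m / 2) * ((r + m / 2)⁻¹) ^ 4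
    - (m / 2) ^ 2 * ((r + m / 2)⁻¹) ^ 5 + (m / 2) ^ 3 * ((r + m / 2)⁻¹) ^ 6 / 3)

lemma PJ_H_deriv (m J r : ℝ) (hs : r + m / 2 ≠ 0) :
    HasDerivAt (PJ_H m J) (PJ_G m J r) r := by
  have hu : HasDerivAt (fun r : ℝ => (r + m / 2)⁻¹) (-1 / (r + m / 2) ^ 2) r := by
    have h := ((hasDerivAt_id r).add_const (m / 2)).inv hs; simp at h; exact h
  set u : ℝ → ℝ := fun r => (r + m / 2)⁻¹
  set du : ℝ := -1 / (r + m / 2) ^ 2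
  have h3 := hu.pow 3
  have h4 := hu.pow 4
  have h5 := hu.pow 5
  have h6 := hu.pow 6
  have := (((((h3.div_const 3).neg.add (h4.const_mul (m / 2))).sub
      (h5.const_mul ((m / 2) ^ 2))).add ((h6.const_mul ((m / 2) ^ 3)).div_const 3)).const_mul
      (6 * m * J ^ 2))
  have this' : HasDerivAt (_ : ℝ → ℝ) (_ : ℝ) r := this
  convert this' using 1
  · ext y; unfold PJ_H; simp only [u, Pi.add_apply, Pi.sub_apply, Pi.neg_apply, Pi.pow_apply]; ring
  · unfold PJ_G
    simp only [u, du]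
    push_cast
    rw [show r = (r + m / 2) - m / 2 by ring]
    generalize hsv : r + m / 2 = s at hs ⊢
    field_simp
    ring

lemma PJ_H_tendsto (m J : ℝ) : Tendsto (PJ_H m J) atTop (nhds 0) := by
  have h0 : Tendsto (fun b : ℝ => (b + m / 2)⁻¹) atTop (nhds 0) :=
    tendsto_inv_atTop_zero.comp (tendsto_atTop_add_const_right _ _ tendsto_id)
  have hc : Continuous (fun y : ℝ => 6 * m * J ^ 2 *
      (-(y ^ 3) / 3 + (m / 2) * y ^ 4 - (m / 2) ^ 2 * y ^ 5 + (m / 2) ^ 3 * y ^ 6 / 3)) := by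
    fun_prop
  have := (hc.tendsto 0).comp h0
  show Tendsto (fun r => PJ_H m J r) atTop (nhds 0)
  simpa [PJ_H, Function.comp_def] using this

/-- Estimate (52): the angular momentum contribution satisfies `P_J ≥ J²/(4m²)`. -/
theorem PJ_lower_bound (m : ℝ) (hm : 0 < m) (J : ℝ)
    (f : ℝ → ℝ) (hf : ContDiffOn ℝ 1 f (Set.Ici (m / 2)))
    (PJ : ℝ)
    (hPJ : ImproperEq
      (fun r : ℝ => 2 * (m * alphaF m r / (4 * r ^ 2 * (psi0 m r) ^ 7)) *
        ∫ z in (-1 : ℝ)..1,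
          ((deriv f r) ^ 2 * (1 - z ^ 2) ^ 2
            + (1 - z ^ 2) * (4 * f r * z + 3 * J) ^ 2 / r ^ 2))
      (m / 2) PJ) :
    PJ ≥ J ^ 2 / (4 * m ^ 2) := by
  set F : ℝ → ℝ := fun r : ℝ => 2 * (m * alphaF m r / (4 * r ^ 2 * (psi0 m r) ^ 7)) *
        ∫ z in (-1 : ℝ)..1,
          ((deriv f r) ^ 2 * (1 - z ^ 2) ^ 2
            + (1 - z ^ 2) * (4 * f r * z + 3 * J) ^ 2 / r ^ 2) with hF
  -- pointwise bound F ≥ G on [m/2, ∞)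
  have hFG : ∀ r : ℝ, m / 2 ≤ r → PJ_G m J r ≤ F r := by
    intro r hr
    have hr0 : 0 < r := lt_of_lt_of_le (by linarith) hr
    have hpsi : 0 < psi0 m r := by
      unfold psi0; positivity
    have halpha : 0 ≤ alphaF m r := by
      unfold alphaF
      rw [sub_nonneg, div_le_one (by linarith)]
      linarith
    have hK : 0 ≤ 2 * (m * alphaF m r / (4 * r ^ 2 * (psi0 m r) ^ 7)) := by positivity
    have hinner := PJ_inner_bound ((deriv f r) ^ 2) (f r) J r (sq_nonneg _) hr0
    have h1 : 2 * (m * alphaF m r / (4 * r ^ 2 * (psi0 m r) ^ 7)) * (12 * J ^ 2 / r ^ 2)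
        ≤ F r := by
      exact mul_le_mul_of_nonneg_left hinner hK
    refine le_trans (le_of_eq ?_) h1
    unfold PJ_G alphaF psi0
    have hs : r + m / 2 ≠ 0 := by positivity
    field_simp
    ring
  -- integral identity for G
  have hGeq : ∀ b : ℝ, m / 2 ≤ b →
      ∫ r in (m / 2)..b, PJ_G m J r = PJ_H m J b - PJ_H m J (m / 2) := by
    intro b hb
    apply intervalIntegral.integral_eq_sub_of_hasDerivAt
    · intro x hx
      rw [Set.uIcc_of_le hb] at hx
      exact PJ_H_deriv m J x (by have h1 := hx.1; intro h0; nlinarith)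
    · apply ContinuousOn.intervalIntegrable
      apply ContinuousOn.div (by fun_prop) (by fun_prop)
      intro x hx
      rw [Set.uIcc_of_le hb] at hx
      have hx1 := hx.1
      exact pow_ne_zero _ (by intro h0; nlinarith)
  -- integrability of G
  have hGint : ∀ b : ℝ, m / 2 ≤ b →
      IntervalIntegrable (PJ_G m J) MeasureTheory.volume (m / 2) b := by
    intro b hb
    apply ContinuousOn.intervalIntegrable
    apply ContinuousOn.div (by fun_prop) (by fun_prop)
    intro x hx
    rw [Set.uIcc_of_le hb] at hx
    have hx1 := hx.1
    exact pow_ne_zero _ (by intro h0; nlinarith)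
  -- eventual comparison of integrals
  have hev : ∀ᶠ b in atTop, PJ_H m J b - PJ_H m J (m / 2) ≤ ∫ r in (m / 2)..b, F r := by
    filter_upwards [eventually_ge_atTop (m / 2)] with b hb
    rw [← hGeq b hb]
    apply intervalIntegral.integral_mono_on hb (hGint b hb) (hPJ.1 b)
    intro r hr
    exact hFG r hr.1
  have ht1 : Tendsto (fun b : ℝ => PJ_H m J b - PJ_H m J (m / 2)) atTop
      (nhds (0 - PJ_H m J (m / 2))) :=
    (PJ_H_tendsto m J).sub_const _
  have hle : 0 - PJ_H m J (m / 2) ≤ PJ := le_of_tendsto_of_tendsto ht1 hPJ.2 hev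
  have hHval : PJ_H m J (m / 2) = -(J ^ 2 / (4 * m ^ 2)) := by
    unfold PJ_H
    have hm0 : m ≠ 0 := hm.ne'
    rw [show m / 2 + m / 2 = m by ring]
    field_simp
    ring
  rw [hHval] at hle
  linarith
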